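/- Under the hypotheses of the Newton-type contraction bound, if additionally the initial iterate z₀ ∈ B satisfies ‖z₀ − z̄‖ < 2(1 − κ)/ω (with ω > 0), then the sequence defined by z_{l+1} = z_l − J(z_l)⁻¹F(z_l) remains in the ball of radius ‖z₀ − z̄‖ around z̄ and converges to z̄. -/

import Mathlib

open Metric Filter intervalIntegral

lemma newton_step_bound {N : ℕ}
    (F : EuclideanSpace ℝ (Fin N) → EuclideanSpace ℝ (Fin N))
    (hF : ContDiff ℝ 1 F)
    (zbar : EuclideanSpace ℝ (Fin N)) (hFzbar : F zbar = 0)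
    (J : EuclideanSpace ℝ (Fin N) → (EuclideanSpace ℝ (Fin N) ≃L[ℝ] EuclideanSpace ℝ (Fin N)))
    (r : ℝ) (ω κ : ℝ) (hκ0 : 0 ≤ κ) (hω0 : 0 ≤ ω)
    (hLip : ∀ z ∈ ball zbar r, ∀ z' ∈ ball zbar r,
      ‖((J z).symm : EuclideanSpace ℝ (Fin N) →L[ℝ] EuclideanSpace ℝ (Fin N)).comp
        (fderiv ℝ F z - fderiv ℝ F z')‖ ≤ ω * ‖z - z'‖)
    (hComp : ∀ z ∈ ball zbar r,
      ‖((J z).symm : EuclideanSpace ℝ (Fin N) →L[ℝ] EuclideanSpace ℝ (Fin N)).comp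
        (fderiv ℝ F z - ((J z : EuclideanSpace ℝ (Fin N) →L[ℝ] EuclideanSpace ℝ (Fin N))))‖ ≤ κ)
    (z : EuclideanSpace ℝ (Fin N)) (hz : z ∈ ball zbar r)
    (hseg : ∀ t : ℝ, t ∈ Set.Icc (0:ℝ) 1 → zbar + t • (z - zbar) ∈ ball zbar r) :
    ‖(z - (J z).symm (F z)) - zbar‖ ≤ (κ + ω / 2 * ‖z - zbar‖) * ‖z - zbar‖ := by
  set A : EuclideanSpace ℝ (Fin N) →L[ℝ] EuclideanSpace ℝ (Fin N) :=
    ((J z).symm : EuclideanSpace ℝ (Fin N) →L[ℝ] EuclideanSpace ℝ (Fin N)) with hA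
  set v : EuclideanSpace ℝ (Fin N) := z - zbar with hv
  set c : ℝ := ‖v‖ with hc
  have hFd : Differentiable ℝ F := hF.differentiable one_ne_zero
  set γ : ℝ → EuclideanSpace ℝ (Fin N) := fun t => zbar + t • v with hγ
  set D : ℝ → EuclideanSpace ℝ (Fin N) := fun t =>
    (ContinuousLinearMap.id ℝ (EuclideanSpace ℝ (Fin N)) - A.comp (fderiv ℝ F (γ t))) v with hD
  have hγderiv : ∀ t : ℝ, HasDerivAt γ v t := by
    intro t
    simpa [hγ] using ((hasDerivAt_id t).smul_const v).const_add zbar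
  have hgderiv : ∀ t : ℝ, HasDerivAt (fun s => γ s - A (F (γ s))) (D t) t := by
    intro t
    have h1 : HasFDerivAt (fun w => w - A (F w))
        (ContinuousLinearMap.id ℝ (EuclideanSpace ℝ (Fin N)) - A.comp (fderiv ℝ F (γ t)))
        (γ t) :=
      (hasFDerivAt_id (γ t)).sub (A.hasFDerivAt.comp (γ t) (hFd (γ t)).hasFDerivAt)
    exact h1.comp_hasDerivAt t (hγderiv t)
  have hcont : Continuous D := by
    have h1 : Continuous fun t => fderiv ℝ F (γ t) :=
      (hF.continuous_fderiv one_ne_zero).comp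
        (continuous_const.add (continuous_id.smul continuous_const))
    have h2 : Continuous fun t => ContinuousLinearMap.id ℝ
        (EuclideanSpace ℝ (Fin N)) - A.comp (fderiv ℝ F (γ t)) :=
      continuous_const.sub (h1.const_clm_comp A)
    exact h2.clm_apply continuous_const
  have hint : IntervalIntegrable D MeasureTheory.volume 0 1 :=
    hcont.intervalIntegrable 0 1
  have hFTC : ∫ t in (0:ℝ)..1, D t = (z - A (F z)) - zbar := by
    rw [integral_eq_sub_of_hasDerivAt (fun t _ => hgderiv t) hint]
    simp [hγ, hFzbar, hv]
  have hnorm : ∀ t ∈ Set.Icc (0:ℝ) 1, ‖D t‖ ≤ (κ + ω * (1 - t) * c) * c := by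
    intro t ht
    have hw : γ t ∈ ball zbar r := hseg t ht
    have hid : ContinuousLinearMap.id ℝ (EuclideanSpace ℝ (Fin N)) -
        A.comp (fderiv ℝ F (γ t)) =
        A.comp ((fderiv ℝ F z - fderiv ℝ F (γ t))) -
        A.comp (fderiv ℝ F z - ((J z : EuclideanSpace ℝ (Fin N) →L[ℝ] EuclideanSpace ℝ (Fin N)))) := by
      rw [ContinuousLinearMap.comp_sub, ContinuousLinearMap.comp_sub, hA,
        ContinuousLinearEquiv.coe_symm_comp_coe]
      abel
    have hzw : z - γ t = (1 - t) • v := by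
      simp only [hγ, hv]
      module
    have hnzw : ‖z - γ t‖ = (1 - t) * c := by
      rw [hzw, norm_smul, Real.norm_eq_abs, abs_of_nonneg (by linarith [ht.2])]
    have hb1 : ‖A.comp (fderiv ℝ F z - fderiv ℝ F (γ t))‖ ≤ ω * ((1 - t) * c) := by
      have := hLip z hz (γ t) hw
      rw [hnzw] at this
      rw [hA]
      linarith [this]
    have hb2 : ‖A.comp (fderiv ℝ F z -
        ((J z : EuclideanSpace ℝ (Fin N) →L[ℝ] EuclideanSpace ℝ (Fin N))))‖ ≤ κ := by
      rw [hA]; exact hComp z hz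
    calc ‖D t‖ ≤ ‖ContinuousLinearMap.id ℝ (EuclideanSpace ℝ (Fin N)) -
          A.comp (fderiv ℝ F (γ t))‖ * ‖v‖ := ContinuousLinearMap.le_opNorm _ _
      _ ≤ (ω * ((1 - t) * c) + κ) * c := by
          rw [hid]
          gcongr
          exact le_trans (norm_sub_le _ _) (by gcongr)
      _ = (κ + ω * (1 - t) * c) * c := by ring
  have hcnonneg : 0 ≤ c := norm_nonneg _
  have hIbound : ‖∫ t in (0:ℝ)..1, D t‖ ≤ (κ + ω / 2 * c) * c := by
    have hbd := intervalIntegral.norm_integral_le_of_norm_le (f := D)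
      (μ := MeasureTheory.volume) (a := 0) (b := 1)
      (g := fun t => (κ + ω * (1 - t) * c) * c) (hab := zero_le_one)
      (by
        exact Filter.Eventually.of_forall (fun t ht => hnorm t ⟨le_of_lt ht.1, ht.2⟩))
      ((Continuous.intervalIntegrable (by fun_prop) 0 1))
    have hval : ∫ t in (0:ℝ)..1, (κ + ω * (1 - t) * c) * c = (κ + ω / 2 * c) * c := by
      have heq : (fun t : ℝ => (κ + ω * (1 - t) * c) * c) =
          fun t : ℝ => (κ * c + ω * c * c) - (ω * c * c) * t := by
        funext t; ring
      rw [heq, intervalIntegral.integral_sub (intervalIntegrable_const)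
        ((intervalIntegral.intervalIntegrable_id).const_mul _),
        intervalIntegral.integral_const, intervalIntegral.integral_const_mul,
        integral_id]
      simp only [smul_eq_mul]
      ring
    rw [hval] at hbd
    exact hbd
  show ‖z - A (F z) - zbar‖ ≤ (κ + ω / 2 * c) * c
  rw [← hFTC]
  exact hIbound


/-- Under the Newton-type contraction hypotheses, if the initial iterate
satisfies `‖z₀ − z̄‖ < 2(1 − κ)/ω`, the Newton-type sequence stays in the ball of
radius `‖z₀ − z̄‖` around `z̄` and converges to `z̄`. -/
theorem newton_type_iterates_converge (N : ℕ)
    (F : EuclideanSpace ℝ (Fin N) → EuclideanSpace ℝ (Fin N))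
    (hF : ContDiff ℝ 1 F)
    (zbar : EuclideanSpace ℝ (Fin N)) (hFzbar : F zbar = 0)
    (J : EuclideanSpace ℝ (Fin N) → (EuclideanSpace ℝ (Fin N) ≃L[ℝ] EuclideanSpace ℝ (Fin N)))
    (r : ℝ) (hr : 0 < r) (ω κ : ℝ) (hκ0 : 0 ≤ κ) (hκ : κ < 1) (hω : 0 < ω)
    (hLip : ∀ z ∈ ball zbar r, ∀ z' ∈ ball zbar r,
      ‖((J z).symm : EuclideanSpace ℝ (Fin N) →L[ℝ] EuclideanSpace ℝ (Fin N)).comp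
        (fderiv ℝ F z - fderiv ℝ F z')‖ ≤ ω * ‖z - z'‖)
    (hComp : ∀ z ∈ ball zbar r,
      ‖((J z).symm : EuclideanSpace ℝ (Fin N) →L[ℝ] EuclideanSpace ℝ (Fin N)).comp
        (fderiv ℝ F z - ((J z : EuclideanSpace ℝ (Fin N) →L[ℝ] EuclideanSpace ℝ (Fin N))))‖ ≤ κ)
    (z0 : EuclideanSpace ℝ (Fin N))
    (hz0 : ‖z0 - zbar‖ < 2 * (1 - κ) / ω)
    (hball : closedBall zbar ‖z0 - zbar‖ ⊆ ball zbar r)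
    (zseq : ℕ → EuclideanSpace ℝ (Fin N))
    (hinit : zseq 0 = z0)
    (hstep : ∀ l : ℕ, zseq (l + 1) = zseq l - (J (zseq l)).symm (F (zseq l))) :
    (∀ l : ℕ, ‖zseq l - zbar‖ ≤ ‖z0 - zbar‖) ∧
      Tendsto zseq atTop (nhds zbar) := by
  set R : ℝ := ‖z0 - zbar‖ with hR
  have hR0 : 0 ≤ R := norm_nonneg _
  set q : ℝ := κ + ω / 2 * R with hq
  have hq0 : 0 ≤ q := by positivity
  have hq1 : q < 1 := by
    rw [lt_div_iff₀ hω] at hz0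
    simp only [hq]
    nlinarith
  have hmem : ∀ z : EuclideanSpace ℝ (Fin N), ‖z - zbar‖ ≤ R → z ∈ ball zbar r := by
    intro z hzR
    exact hball (by rwa [mem_closedBall_iff_norm])
  have key : ∀ z : EuclideanSpace ℝ (Fin N), ‖z - zbar‖ ≤ R →
      ‖(z - (J z).symm (F z)) - zbar‖ ≤ q * ‖z - zbar‖ := by
    intro z hzR
    have hb := newton_step_bound F hF zbar hFzbar J r ω κ hκ0 (le_of_lt hω) hLip hComp z
      (hmem z hzR)
      (by
        intro t ht
        apply hmem
        have : zbar + t • (z - zbar) - zbar = t • (z - zbar) := by abel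
        rw [this, norm_smul, Real.norm_eq_abs, abs_of_nonneg ht.1]
        calc t * ‖z - zbar‖ ≤ 1 * ‖z - zbar‖ := by gcongr; exact ht.2
          _ ≤ R := by rwa [one_mul])
    refine le_trans hb ?_
    have : κ + ω / 2 * ‖z - zbar‖ ≤ q := by
      simp only [hq]
      gcongr
    exact mul_le_mul_of_nonneg_right this (norm_nonneg _)
  have hbound : ∀ l : ℕ, ‖zseq l - zbar‖ ≤ q ^ l * R := by
    intro l
    induction l with
    | zero => simp [hinit, hR]
    | succ l ih =>
      have hRl : ‖zseq l - zbar‖ ≤ R := by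
        refine le_trans ih ?_
        calc q ^ l * R ≤ 1 * R := by gcongr; exact pow_le_one₀ hq0 (le_of_lt hq1)
          _ = R := one_mul R
      calc ‖zseq (l + 1) - zbar‖ = ‖(zseq l - (J (zseq l)).symm (F (zseq l))) - zbar‖ := by
            rw [hstep l]
        _ ≤ q * ‖zseq l - zbar‖ := key (zseq l) hRl
        _ ≤ q * (q ^ l * R) := by gcongr
        _ = q ^ (l + 1) * R := by ring
  constructor
  · intro l
    refine le_trans (hbound l) ?_
    calc q ^ l * R ≤ 1 * R := by gcongr; exact pow_le_one₀ hq0 (le_of_lt hq1)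
      _ = R := one_mul R
  · have h0 : Tendsto (fun l : ℕ => q ^ l * R) atTop (nhds 0) := by
      have := (tendsto_pow_atTop_nhds_zero_of_lt_one hq0 hq1).mul_const R
      simpa using this
    rw [tendsto_iff_norm_sub_tendsto_zero]
    exact squeeze_zero (fun l => norm_nonneg _) hbound h0
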